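/- Let L be a finite flag simplicial complex such that every non-maximal simplex is contained in at least two maximal simplices. For simplices u, v of L, one has u ⊆ v if and only if {w : w a simplex of L with u ∪ w a simplex of L} ⊇ {w : w a simplex of L with v ∪ w a simplex of L}. Consequently, any bijection of the set of simplices of L that preserves the partial operation of symmetric difference (u, v) ↦ u Δ v (defined whenever u, v, u Δ v are all simplices) preserves inclusion of simplices. -/

import Mathlib

/-- An abstract simplicial complex on a vertex type `V`: a collection of finite subsets
(`faces`) closed under taking subsets. -/
structure SimplicialCpx (V : Type) where
  faces : Finset V → Prop
  down_closed : ∀ s t : Finset V, t ⊆ s → faces s → faces t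
  empty_faces : faces ∅

namespace SimplicialCpx

variable {V : Type}

/-- A maximal simplex: a face which is not a proper face of any other face. -/
def IsMaximal (L : SimplicialCpx V) (s : Finset V) : Prop :=
  L.faces s ∧ ∀ t, L.faces t → s ⊆ t → t = s

/-- A flag complex: every set of vertices which are pairwise joined spans a simplex. -/
def Flag [DecidableEq V] (L : SimplicialCpx V) : Prop :=
  ∀ s : Finset V, (∀ a ∈ s, ∀ b ∈ s, L.faces {a, b}) → L.faces s

end SimplicialCpx

section Aux

variable {V : Type} [Fintype V] [DecidableEq V] (L : SimplicialCpx V)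

/-- Every face is contained in a maximal face. -/
lemma aux_exists_max (s : Finset V) (hs : L.faces s) : ∃ m, L.IsMaximal m ∧ s ⊆ m := by
  obtain ⟨m, hm, hmax⟩ := Set.Finite.exists_maximalFor Finset.card
    {t | L.faces t ∧ s ⊆ t} (Set.toFinite _) ⟨s, hs, subset_rfl⟩
  refine ⟨m, ⟨hm.1, fun t ht hmt => ?_⟩, hm.2⟩
  exact (Finset.eq_of_subset_of_card_le hmt
    (hmax ⟨ht, hm.2.trans hmt⟩ (Finset.card_le_card hmt))).symm

/-- If every maximal face containing `s` contains `a`, then `a ∈ s` (under `htwo`). -/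
lemma aux_mem (htwo : ∀ s, L.faces s → ¬ L.IsMaximal s →
      ∃ m₁ m₂, L.IsMaximal m₁ ∧ L.IsMaximal m₂ ∧ m₁ ≠ m₂ ∧ s ⊆ m₁ ∧ s ⊆ m₂)
    (s : Finset V) (hs : L.faces s) (a : V)
    (ha : ∀ m, L.IsMaximal m → s ⊆ m → a ∈ m) : a ∈ s := by
  by_contra has
  obtain ⟨m, hm, hsm⟩ := aux_exists_max L s hs
  have ham : a ∈ m := ha m hm hsm
  set s' := m.erase a with hs'
  have hs'm : s' ⊆ m := Finset.erase_subset _ _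
  have hfs' : L.faces s' := L.down_closed m s' hs'm hm.1
  have hss' : s ⊆ s' := fun x hx => Finset.mem_erase.2 ⟨fun h => has (h ▸ hx), hsm hx⟩
  have hnmax : ¬ L.IsMaximal s' := by
    intro h
    have heq := h.2 m hm.1 hs'm
    rw [heq] at ham
    exact (Finset.notMem_erase a m) ham
  obtain ⟨m₁, m₂, hm₁, hm₂, hne, h1, h2⟩ := htwo s' hfs' hnmax
  have key : ∀ m', L.IsMaximal m' → s' ⊆ m' → m' = m := by
    intro m' hm' hsub
    have ham' : a ∈ m' := ha m' hm' (hss'.trans hsub)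
    have : m ⊆ m' := by
      intro x hx
      by_cases hxa : x = a
      · exact hxa ▸ ham'
      · exact hsub (Finset.mem_erase.2 ⟨hxa, hx⟩)
    exact hm.2 m' hm'.1 this
  exact hne ((key m₁ hm₁ h1).trans (key m₂ hm₂ h2).symm)

/-- In a flag complex, if `u`, `v`, `u Δ v` are faces then so is `u ∪ v`. -/
lemma aux_union (hflag : L.Flag) (u v : Finset V) (hu : L.faces u) (hv : L.faces v)
    (hd : L.faces (symmDiff u v)) : L.faces (u ∪ v) := by
  apply hflag
  intro a ha b hb
  have pair : ∀ w : Finset V, L.faces w → a ∈ w → b ∈ w → L.faces {a, b} := by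
    intro w hw haw hbw
    exact L.down_closed w {a, b} (Finset.insert_subset haw (Finset.singleton_subset_iff.2 hbw)) hw
  rw [Finset.mem_union] at ha hb
  by_cases hau : a ∈ u <;> by_cases hav : a ∈ v <;> by_cases hbu : b ∈ u <;> by_cases hbv : b ∈ v
  all_goals first
    | exact pair u hu (by assumption) (by assumption)
    | exact pair v hv (by assumption) (by assumption)
    | exact pair (symmDiff u v) hd (Finset.mem_symmDiff.2 (by tauto)) (Finset.mem_symmDiff.2 (by tauto))
    | tauto

end Aux

lemma aux_sdsub {V : Type} [DecidableEq V] (x y : Finset V) : symmDiff x y ⊆ x ∪ y := by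
  intro a ha
  rw [Finset.mem_symmDiff] at ha
  rw [Finset.mem_union]
  tauto

/-- In a finite flag complex where every non-maximal simplex lies in at least two maximal
simplices: `u ⊆ v` iff the set of simplices compatible with `v` is contained in the set of
simplices compatible with `u`; consequently any bijection of the simplices preserving the
partial symmetric-difference operation preserves inclusion. -/
theorem stmt5 {V : Type} [Fintype V] [DecidableEq V] (L : SimplicialCpx V) (hflag : L.Flag)
    (htwo : ∀ s, L.faces s → ¬ L.IsMaximal s →
      ∃ m₁ m₂, L.IsMaximal m₁ ∧ L.IsMaximal m₂ ∧ m₁ ≠ m₂ ∧ s ⊆ m₁ ∧ s ⊆ m₂) :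
    (∀ u v : Finset V, L.faces u → L.faces v →
      (u ⊆ v ↔ {w : Finset V | L.faces w ∧ L.faces (v ∪ w)} ⊆
        {w : Finset V | L.faces w ∧ L.faces (u ∪ w)})) ∧
    (∀ φ : Finset V → Finset V,
      Set.BijOn φ {s : Finset V | L.faces s} {s : Finset V | L.faces s} →
      (∀ u v : Finset V, L.faces u → L.faces v → L.faces (symmDiff u v) →
        L.faces (symmDiff (φ u) (φ v)) ∧ φ (symmDiff u v) = symmDiff (φ u) (φ v)) →
      ∀ u v : Finset V, L.faces u → L.faces v → u ⊆ v → φ u ⊆ φ v) := by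
  have part1 : ∀ u v : Finset V, L.faces u → L.faces v →
      (u ⊆ v ↔ {w : Finset V | L.faces w ∧ L.faces (v ∪ w)} ⊆
        {w : Finset V | L.faces w ∧ L.faces (u ∪ w)}) := by
    intro u v hu hv
    constructor
    · intro huv w hw
      exact ⟨hw.1, L.down_closed (v ∪ w) (u ∪ w) (Finset.union_subset_union_left huv) hw.2⟩
    · intro h a hau
      refine aux_mem L htwo v hv a ?_
      intro m hm hvm
      have hmem : m ∈ {w : Finset V | L.faces w ∧ L.faces (v ∪ w)} :=
        ⟨hm.1, by rw [Finset.union_eq_right.2 hvm]; exact hm.1⟩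
      have h2 := h hmem
      have hum : L.faces (u ∪ m) := h2.2
      have : u ∪ m = m := hm.2 (u ∪ m) hum Finset.subset_union_right
      exact this ▸ Finset.mem_union_left m hau
  refine ⟨part1, ?_⟩
  intro φ hbij hpres u v hu hv huv
  -- backward preservation via finiteness
  have hback : ∀ a b : Finset V, L.faces a → L.faces b → L.faces (symmDiff (φ a) (φ b)) →
      L.faces (symmDiff a b) := by
    intro a b ha hb hfd
    set R : Set (Finset V × Finset V) :=
      {p | L.faces p.1 ∧ L.faces p.2 ∧ L.faces (symmDiff p.1 p.2)} with hR
    have hmaps : Set.MapsTo (fun p : Finset V × Finset V => (φ p.1, φ p.2)) R R := by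
      rintro ⟨x, y⟩ ⟨hx, hy, hxy⟩
      exact ⟨hbij.1 hx, hbij.1 hy, (hpres x y hx hy hxy).1⟩
    have hinj : Set.InjOn (fun p : Finset V × Finset V => (φ p.1, φ p.2)) R := by
      rintro ⟨x, y⟩ ⟨hx, hy, -⟩ ⟨x', y'⟩ ⟨hx', hy', -⟩ heq
      have h1 := hbij.2.1 hx hx' (congrArg Prod.fst heq)
      have h2 := hbij.2.1 hy hy' (congrArg Prod.snd heq)
      exact Prod.ext h1 h2
    have hsurj := ((Set.toFinite R).injOn_iff_bijOn_of_mapsTo hmaps).1 hinj |>.surjOn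
    have hmem : (φ a, φ b) ∈ R := ⟨hbij.1 ha, hbij.1 hb, hfd⟩
    obtain ⟨⟨a', b'⟩, ⟨ha', hb', hd'⟩, heq⟩ := hsurj hmem
    have e1 := hbij.2.1 ha' ha (congrArg Prod.fst heq)
    have e2 := hbij.2.1 hb' hb (congrArg Prod.snd heq)
    rwa [e1, e2] at hd'
  have hφu : L.faces (φ u) := hbij.1 hu
  have hφv : L.faces (φ v) := hbij.1 hv
  rw [part1 (φ u) (φ v) hφu hφv]
  intro w hw
  obtain ⟨w', hw', hφw'⟩ := hbij.2.2 (show w ∈ {s : Finset V | L.faces s} from hw.1)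
  subst hφw'
  have hd : L.faces (symmDiff (φ v) (φ w')) :=
    L.down_closed (φ v ∪ φ w') _ (aux_sdsub _ _) hw.2
  have hvw' : L.faces (symmDiff v w') := hback v w' hv hw' hd
  have huvw' : L.faces (v ∪ w') := aux_union L hflag v w' hv hw' hvw'
  have huw' : L.faces (u ∪ w') := L.down_closed (v ∪ w') (u ∪ w')
    (Finset.union_subset_union_left huv) huvw'
  have hduw' : L.faces (symmDiff u w') :=
    L.down_closed (u ∪ w') _ (aux_sdsub _ _) huw'
  have := (hpres u w' hu hw' hduw').1
  exact ⟨hw.1, aux_union L hflag (φ u) (φ w') (hbij.1 hu) (hbij.1 hw') this⟩
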